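/- For every row-strict tableau σ of shape λ ⊢ n, the number of Springer pairs of σ equals Σ_i (i−1)λ_i, where λ = (λ_1 ≥ λ_2 ≥ …). Equivalently, |pairs(σ)| depends only on the shape λ and equals the dimension of the Springer fiber of type λ. -/

import Mathlib

open scoped Classical

/-- The set of boxes (row, column), 0-indexed, of the Young diagram of a partition given
as a list of row lengths. -/
def cells (L : List ℕ) : Set (ℕ × ℕ) := {p | p.1 < L.length ∧ p.2 < L.getD p.1 0}

/-- `pos` encodes a tableau of shape `L` with entries `1, …, n`:  `pos i` is the (row,
column) of the box labeled `i`.  It is injective on `{1,…,n}` with image the set of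
boxes, and is normalized to `(0,0)` outside `{1,…,n}`. -/
def IsTab (L : List ℕ) (n : ℕ) (pos : ℕ → ℕ × ℕ) : Prop :=
  Set.InjOn pos (Set.Icc 1 n) ∧ pos '' Set.Icc 1 n = cells L ∧
    ∀ i, i ∉ Set.Icc 1 n → pos i = (0, 0)

/-- Row-strictness: entries increase along each row (left to right). -/
def RowStrict (n : ℕ) (pos : ℕ → ℕ × ℕ) : Prop :=
  ∀ i j, i ∈ Set.Icc 1 n → j ∈ Set.Icc 1 n →
    (pos j).1 = (pos i).1 → (pos j).2 = (pos i).2 + 1 → i < j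

/-- A row-strict tableau of shape `L` with entries `1, …, n`. -/
def IsRST (L : List ℕ) (n : ℕ) (pos : ℕ → ℕ × ℕ) : Prop :=
  IsTab L n pos ∧ RowStrict n pos

/-- `(i, j)` with `i > j` is a Springer pair: `i` lies in the same column as `j` or in a
column strictly to its left, and if the box directly right of `j` is labeled `r` then
`i < r`. -/
def SpringerPair (n : ℕ) (pos : ℕ → ℕ × ℕ) (i j : ℕ) : Prop :=
  1 ≤ j ∧ j < i ∧ i ≤ n ∧ (pos i).2 ≤ (pos j).2 ∧
    ∀ r ∈ Set.Icc 1 n, pos r = ((pos j).1, (pos j).2 + 1) → i < r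

/-- A Springer inversion is a Springer pair `(i, j)` such that if `i` is in the same
column as `j` then `i` lies strictly below `j`. -/
def SpringerInv (n : ℕ) (pos : ℕ → ℕ × ℕ) (i j : ℕ) : Prop :=
  SpringerPair n pos i j ∧ ((pos i).2 = (pos j).2 → (pos j).1 < (pos i).1)

/-- The number of Springer pairs of a tableau. -/
noncomputable def pairsCount (n : ℕ) (pos : ℕ → ℕ × ℕ) : ℕ :=
  {p : ℕ × ℕ | SpringerPair n pos p.1 p.2}.ncard

/-- The number of Springer inversions of a tableau. -/
noncomputable def invCount (n : ℕ) (pos : ℕ → ℕ × ℕ) : ℕ :=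
  {p : ℕ × ℕ | SpringerInv n pos p.1 p.2}.ncard

/-- `d` is a divisor of the tableau: `d ∣ n` and the tableau decomposes into blocks of
`d` consecutive boxes with consecutive labels, i.e. whenever `d ∤ i` the box labeled
`i + 1` is directly to the right of the box labeled `i`. -/
def TabDivisor (n d : ℕ) (pos : ℕ → ℕ × ℕ) : Prop :=
  d ∣ n ∧ ∀ i, 1 ≤ i → i < n → ¬ d ∣ i → pos (i + 1) = ((pos i).1, (pos i).2 + 1)

/-- The quotient tableau `σ/d`: each block of `d` boxes is merged into a single box,
labeled in the same relative order (the block containing `d·m` gets label `m`). -/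
def quotTab (d : ℕ) (pos : ℕ → ℕ × ℕ) : ℕ → ℕ × ℕ :=
  fun m => ((pos (d * m)).1, ((pos (d * m)).2 + 1) / d - 1)

/-- `Σ_i (i−1)·λ_i`, the dimension of the Springer fiber of Jordan type `λ`. -/
def dimB (L : List ℕ) : ℕ := ∑ i ∈ Finset.range L.length, i * L.getD i 0

/-- `L` is a partition of `n`: weakly decreasing positive parts summing to `n`. -/
def IsPartition (L : List ℕ) (n : ℕ) : Prop :=
  L.sum = n ∧ L.Pairwise (· ≥ ·) ∧ ∀ x ∈ L, 0 < x

section Aux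

variable {L : List ℕ} {n : ℕ} {σ : ℕ → ℕ × ℕ}

lemma cells_left {r c c' : ℕ} (h : (r, c) ∈ cells L) (hc : c' ≤ c) :
    (r, c') ∈ cells L := ⟨h.1, lt_of_le_of_lt hc h.2⟩

lemma getD_anti (hs : L.Pairwise (· ≥ ·)) {r r' : ℕ} (h : r' ≤ r) (hr : r < L.length) :
    L.getD r 0 ≤ L.getD r' 0 := by
  rcases eq_or_lt_of_le h with rfl | h'
  · exact le_refl _
  · have hr' : r' < L.length := lt_trans h' hr
    have h2 := hs.rel_get_of_lt (a := ⟨r', hr'⟩) (b := ⟨r, hr⟩) h'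
    simp only [List.get_eq_getElem] at h2
    rw [List.getD_eq_getElem _ _ hr, List.getD_eq_getElem _ _ hr']
    exact h2

lemma mem_cells_of (himg : σ '' Set.Icc 1 n = cells L) {x : ℕ} (hx : x ∈ Set.Icc 1 n) :
    σ x ∈ cells L := himg ▸ Set.mem_image_of_mem σ hx

noncomputable def ent (n : ℕ) (σ : ℕ → ℕ × ℕ) : ℕ × ℕ → ℕ :=
  Function.invFunOn σ (Set.Icc 1 n)

lemma ent_mem (himg : σ '' Set.Icc 1 n = cells L) {p : ℕ × ℕ} (hp : p ∈ cells L) :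
    ent n σ p ∈ Set.Icc 1 n := by
  apply Function.invFunOn_mem
  rw [← himg] at hp
  obtain ⟨a, ha, hap⟩ := hp
  exact ⟨a, ha, hap⟩

lemma ent_spec (himg : σ '' Set.Icc 1 n = cells L) {p : ℕ × ℕ} (hp : p ∈ cells L) :
    σ (ent n σ p) = p := by
  apply Function.invFunOn_eq
  rw [← himg] at hp
  obtain ⟨a, ha, hap⟩ := hp
  exact ⟨a, ha, hap⟩

lemma ent_sigma (hinj : Set.InjOn σ (Set.Icc 1 n)) (himg : σ '' Set.Icc 1 n = cells L)
    {x : ℕ} (hx : x ∈ Set.Icc 1 n) : ent n σ (σ x) = x := by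
  have hc : σ x ∈ cells L := mem_cells_of himg hx
  exact hinj (ent_mem himg hc) hx (ent_spec himg hc)

/-- entries weakly increase along a row (as a function of column). -/
lemma row_mono (hinj : Set.InjOn σ (Set.Icc 1 n)) (himg : σ '' Set.Icc 1 n = cells L)
    (hrs : RowStrict n σ) :
    ∀ d x y, x ∈ Set.Icc 1 n → y ∈ Set.Icc 1 n → (σ y).1 = (σ x).1 →
      (σ y).2 = (σ x).2 + d → x ≤ y := by
  intro d
  induction d with
  | zero =>
    intro x y hx hy h1 h2
    have : σ y = σ x := Prod.ext h1 (by omega)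
    exact le_of_eq (hinj hy hx this).symm
  | succ d ih =>
    intro x y hx hy h1 h2
    have hyc : σ y ∈ cells L := mem_cells_of himg hy
    have hycell : ((σ y).1, (σ x).2 + (d + 1)) ∈ cells L := by
      rw [← h2]; exact hyc
    have hq : ((σ x).1, (σ x).2 + d) ∈ cells L := by
      have hh := cells_left hycell (by omega : (σ x).2 + d ≤ (σ x).2 + (d + 1))
      rwa [h1] at hh
    set z := ent n σ ((σ x).1, (σ x).2 + d) with hz
    have hzm : z ∈ Set.Icc 1 n := ent_mem himg hq
    have hzs : σ z = ((σ x).1, (σ x).2 + d) := ent_spec himg hq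
    have hxz : x ≤ z := ih x z hx hzm (by rw [hzs]) (by rw [hzs])
    have hzy : z < y := hrs z y hzm hy (by rw [hzs, h1]) (by rw [hzs]; omega)
    omega

/-- Key lemma: Springer pairs with first coordinate `i` are counted by entries in
`i`'s column that are smaller than `i`. -/
lemma key (hinj : Set.InjOn σ (Set.Icc 1 n)) (himg : σ '' Set.Icc 1 n = cells L)
    (hrs : RowStrict n σ) {i : ℕ} (hi : i ∈ Finset.Icc 1 n) :
    ((Finset.Icc 1 n).filter (fun j => SpringerPair n σ i j)).card
      = ((Finset.Icc 1 n).filter (fun x => (σ x).2 = (σ i).2 ∧ x < i)).card := by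
  have hi' : i ∈ Set.Icc 1 n := by simpa using hi
  set k := (σ i).2 with hk
  apply Finset.card_bij (fun j _ => ent n σ ((σ j).1, k))
  · -- maps into target
    intro j hj
    rw [Finset.mem_filter] at hj
    have hjI := hj.1
    have hsp := hj.2
    have hji : j < i := hsp.2.1
    have hcol : k ≤ (σ j).2 := hsp.2.2.2.1
    have hjI' : j ∈ Set.Icc 1 n := by simpa using hjI
    have hbox : ((σ j).1, k) ∈ cells L := by
      have := mem_cells_of himg hjI'
      exact cells_left (by exact this) hcol
    have hxm := ent_mem himg hbox
    have hxs := ent_spec himg hbox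
    have hxj : ent n σ ((σ j).1, k) ≤ j := by
      refine row_mono hinj himg hrs ((σ j).2 - k) _ j hxm hjI' (by rw [hxs]) ?_
      rw [hxs]; simp; omega
    rw [Finset.mem_filter, Finset.mem_Icc]
    rcases hxm with ⟨hx1, hx2⟩
    exact ⟨⟨hx1, hx2⟩, by rw [hxs], by omega⟩
  · -- injective
    intro j1 hj1 j2 hj2 heq
    rw [Finset.mem_filter] at hj1 hj2
    obtain ⟨hj1I, sp1⟩ := hj1
    obtain ⟨hj2I, sp2⟩ := hj2
    have hj1' : j1 ∈ Set.Icc 1 n := by simpa using hj1I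
    have hj2' : j2 ∈ Set.Icc 1 n := by simpa using hj2I
    have hb1 : ((σ j1).1, k) ∈ cells L := cells_left (mem_cells_of himg hj1') sp1.2.2.2.1
    have hb2 : ((σ j2).1, k) ∈ cells L := cells_left (mem_cells_of himg hj2') sp2.2.2.2.1
    have hrow : (σ j1).1 = (σ j2).1 := by
      have := congrArg σ heq
      rw [ent_spec himg hb1, ent_spec himg hb2] at this
      exact (Prod.ext_iff.mp this).1
    -- show columns equal; else contradiction via right-neighbor condition
    rcases lt_trichotomy (σ j1).2 (σ j2).2 with hlt | heqc | hgt
    · exfalso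
      have hbz : ((σ j1).1, (σ j1).2 + 1) ∈ cells L := by
        have : ((σ j2).1, (σ j1).2 + 1) ∈ cells L :=
          cells_left (mem_cells_of himg hj2') (by omega)
        rwa [← hrow] at this
      set z := ent n σ ((σ j1).1, (σ j1).2 + 1) with hzdef
      have hzm := ent_mem himg hbz
      have hzs := ent_spec himg hbz
      have hiz : i < z := sp1.2.2.2.2 z hzm hzs
      have hzj2 : z ≤ j2 := by
        refine row_mono hinj himg hrs ((σ j2).2 - (σ j1).2 - 1) z j2 hzm hj2'
          (by rw [hzs, hrow]) ?_
        rw [hzs]; simp; omega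
      have : j2 < i := sp2.2.1
      omega
    · exact hinj hj1' hj2' (Prod.ext hrow heqc)
    · exfalso
      have hbz : ((σ j2).1, (σ j2).2 + 1) ∈ cells L := by
        have : ((σ j1).1, (σ j2).2 + 1) ∈ cells L :=
          cells_left (mem_cells_of himg hj1') (by omega)
        rwa [hrow] at this
      set z := ent n σ ((σ j2).1, (σ j2).2 + 1) with hzdef
      have hzm := ent_mem himg hbz
      have hzs := ent_spec himg hbz
      have hiz : i < z := sp2.2.2.2.2 z hzm hzs
      have hzj1 : z ≤ j1 := by
        refine row_mono hinj himg hrs ((σ j1).2 - (σ j2).2 - 1) z j1 hzm hj1'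
          (by rw [hzs, ← hrow]) ?_
        rw [hzs]; simp; omega
      have : j1 < i := sp1.2.1
      omega
  · -- surjective
    intro x hx
    rw [Finset.mem_filter] at hx
    have hxI := hx.1
    have hxc : (σ x).2 = k := hx.2.1
    have hxi : x < i := hx.2.2
    have hx' : x ∈ Set.Icc 1 n := by simpa using hxI
    set r := (σ x).1 with hrdef
    have hrR : r ≠ (σ i).1 := by
      intro h
      have : σ x = σ i := Prod.ext h hxc
      have := hinj hx' hi' this
      omega
    set S := (Finset.Icc 1 n).filter (fun j => (σ j).1 = r ∧ k ≤ (σ j).2 ∧ j < i) with hS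
    have hxS : x ∈ S := by
      rw [hS, Finset.mem_filter]
      exact ⟨hxI, rfl, le_of_eq hxc.symm, hxi⟩
    have hSne : S.Nonempty := ⟨x, hxS⟩
    set j := S.max' hSne with hj
    have hjS : j ∈ S := S.max'_mem hSne
    rw [hS, Finset.mem_filter] at hjS
    obtain ⟨hjI, hjr, hjk, hji⟩ := hjS
    have hj' : j ∈ Set.Icc 1 n := by simpa using hjI
    have hsp : SpringerPair n σ i j := by
      refine ⟨by simpa using hj'.1, hji, by simpa using hi'.2, hjk, ?_⟩
      intro r' hr' hr's
      have hjr' : j < r' := hrs j r' hj' hr' (by rw [hr's]) (by rw [hr's])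
      rcases lt_trichotomy r' i with h | h | h
      · exfalso
        have : r' ∈ S := by
          rw [hS, Finset.mem_filter, Finset.mem_Icc]
          refine ⟨⟨hr'.1, hr'.2⟩, ?_, ?_, h⟩
          · rw [hr's]; exact hjr
          · rw [hr's]; simp; omega
        have := S.le_max' r' this
        omega
      · exfalso
        have : (σ r').1 = r := by rw [hr's]; exact hjr
        rw [h] at this
        exact hrR this.symm
      · exact h
    refine ⟨j, ?_, ?_⟩
    · rw [Finset.mem_filter]; exact ⟨hjI, hsp⟩
    · rw [hjr]
      have : (r, k) = σ x := (Prod.ext rfl hxc.symm)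
      rw [this]
      exact ent_sigma hinj himg hx'

lemma sum_filter_lt (S : Finset ℕ) :
    ∑ i ∈ S, ((S.filter (fun x => x < i)).card) = ∑ r ∈ Finset.range S.card, r := by
  induction S using Finset.induction_on_max with
  | empty => simp
  | insert a s ha ih =>
    have has : a ∉ s := fun h => lt_irrefl a (ha a h)
    rw [Finset.sum_insert has, Finset.card_insert_of_notMem has, Finset.range_add_one,
      Finset.sum_insert Finset.notMem_range_self]
    have h1 : (insert a s).filter (fun x => x < a) = s := by
      ext x
      simp only [Finset.mem_filter, Finset.mem_insert]
      constructor
      · rintro ⟨rfl | hx, hlt⟩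
        · omega
        · exact hx
      · intro hx; exact ⟨Or.inr hx, ha x hx⟩
    have h2 : ∀ i ∈ s, ((insert a s).filter (fun x => x < i)).card
        = (s.filter (fun x => x < i)).card := by
      intro i hi
      congr 1
      ext x
      simp only [Finset.mem_filter, Finset.mem_insert]
      constructor
      · rintro ⟨rfl | hx, hlt⟩
        · exact absurd hlt (by have := ha i hi; omega)
        · exact ⟨hx, hlt⟩
      · rintro ⟨hx, hlt⟩; exact ⟨Or.inr hx, hlt⟩
    rw [h1, Finset.sum_congr rfl h2, ih]

lemma dc_range (T : Finset ℕ) (h : ∀ r ∈ T, ∀ r', r' ≤ r → r' ∈ T) :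
    T = Finset.range T.card := by
  ext r
  simp only [Finset.mem_range]
  constructor
  · intro hr
    have hsub : Finset.range (r + 1) ⊆ T := by
      intro r' hr'
      exact h r hr r' (by simpa using Nat.lt_succ_iff.mp (Finset.mem_range.mp hr'))
    have := Finset.card_le_card hsub
    simp only [Finset.card_range] at this
    omega
  · intro hr
    by_contra hrT
    have hsub : T ⊆ Finset.range r := by
      intro t ht
      rw [Finset.mem_range]
      by_contra hh
      exact hrT (h t ht r (le_of_not_gt hh))
    have := Finset.card_le_card hsub
    simp only [Finset.card_range] at this
    omega

lemma colCard (hinj : Set.InjOn σ (Set.Icc 1 n)) (himg : σ '' Set.Icc 1 n = cells L)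
    (c : ℕ) :
    ((Finset.Icc 1 n).filter (fun x => (σ x).2 = c)).card
      = ((Finset.range L.length).filter (fun r => c < L.getD r 0)).card := by
  apply Finset.card_bij (fun x _ => (σ x).1)
  · intro x hx
    rw [Finset.mem_filter] at hx ⊢
    have hx' : x ∈ Set.Icc 1 n := by simpa using hx.1
    have hc := mem_cells_of himg hx'
    rw [Finset.mem_range]
    refine ⟨hc.1, ?_⟩
    have := hc.2
    rwa [hx.2] at this
  · intro x1 hx1 x2 hx2 heq
    rw [Finset.mem_filter] at hx1 hx2
    exact hinj (by simpa using hx1.1) (by simpa using hx2.1)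
      (Prod.ext heq (by rw [hx1.2, hx2.2]))
  · intro r hr
    rw [Finset.mem_filter, Finset.mem_range] at hr
    have hc : (r, c) ∈ cells L := ⟨hr.1, hr.2⟩
    refine ⟨ent n σ (r, c), ?_, ?_⟩
    · rw [Finset.mem_filter, Finset.mem_Icc]
      have := ent_mem himg hc
      have hs := ent_spec himg hc
      exact ⟨by simpa using this, by rw [hs]⟩
    · rw [ent_spec himg hc]

end Aux

/-- For every row-strict tableau `σ` of shape `λ ⊢ n`, the number of Springer pairs of
`σ` equals `Σ_i (i−1)λ_i`; in particular it depends only on the shape `λ` and equals the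
dimension of the Springer fiber of type `λ`. -/


theorem stmt10 (L : List ℕ) (n : ℕ) (hL : IsPartition L n)
    (σ : ℕ → ℕ × ℕ) (hσ : IsRST L n σ) :
    pairsCount n σ = dimB L := by
  obtain ⟨hsum, hsort, hpos⟩ := hL
  obtain ⟨⟨hinj, himg, hout⟩, hrs⟩ := hσ
  classical
  set I := Finset.Icc 1 n with hI
  set lam1 := L.getD 0 0 with hlam1
  -- Step 1: pairsCount as a finset card
  have h1 : {p : ℕ × ℕ | SpringerPair n σ p.1 p.2}
      = ↑((I ×ˢ I).filter fun p => SpringerPair n σ p.1 p.2) := by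
    ext p
    simp only [Set.mem_setOf_eq, Finset.coe_filter, Finset.mem_product, hI, Finset.mem_Icc]
    constructor
    · intro h
      have h1j := h.1
      have hji := h.2.1
      have hin := h.2.2.1
      exact ⟨⟨⟨by omega, hin⟩, ⟨h1j, by omega⟩⟩, h⟩
    · tauto
  rw [pairsCount, h1, Set.ncard_coe_finset]
  -- Step 2: split by first coordinate
  have h2 : ((I ×ˢ I).filter fun p => SpringerPair n σ p.1 p.2).card
      = ∑ i ∈ I, (I.filter fun j => SpringerPair n σ i j).card := by
    rw [Finset.card_filter, Finset.sum_product]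
    exact Finset.sum_congr rfl fun i _ => (Finset.card_filter _ _).symm
  rw [h2]
  -- Step 3: key bijection
  have h3 : ∑ i ∈ I, (I.filter fun j => SpringerPair n σ i j).card
      = ∑ i ∈ I, (I.filter fun x => (σ x).2 = (σ i).2 ∧ x < i).card :=
    Finset.sum_congr rfl fun i hi => key hinj himg hrs (by rwa [hI] at hi)
  rw [h3]
  -- Step 4: fiber over columns
  have hmaps : ∀ i ∈ I, (σ i).2 ∈ Finset.range lam1 := by
    intro i hi
    have hi' : i ∈ Set.Icc 1 n := by rw [hI] at hi; simpa using hi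
    have hc := mem_cells_of himg hi'
    rw [Finset.mem_range, hlam1]
    have ha := getD_anti hsort (Nat.zero_le (σ i).1) hc.1
    have hb := hc.2
    omega
  rw [← Finset.sum_fiberwise_of_maps_to hmaps
    (fun i => (I.filter fun x => (σ x).2 = (σ i).2 ∧ x < i).card)]
  -- Step 5: each column contributes C(m_c, 2)
  have h5 : ∀ c ∈ Finset.range lam1,
      (∑ i ∈ I.filter (fun i => (σ i).2 = c),
        (I.filter fun x => (σ x).2 = (σ i).2 ∧ x < i).card)
      = ∑ r ∈ (Finset.range L.length).filter (fun r => c < L.getD r 0), r := by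
    intro c _
    have step : ∀ i ∈ I.filter (fun i => (σ i).2 = c),
        (I.filter fun x => (σ x).2 = (σ i).2 ∧ x < i).card
          = ((I.filter (fun x => (σ x).2 = c)).filter (fun x => x < i)).card := by
      intro i hi
      rw [Finset.mem_filter] at hi
      rw [Finset.filter_filter, hi.2]
    rw [Finset.sum_congr rfl step, sum_filter_lt]
    have hT : (Finset.range L.length).filter (fun r => c < L.getD r 0)
        = Finset.range (((Finset.range L.length).filter (fun r => c < L.getD r 0)).card) := by
      apply dc_range
      intro r hr r' hr'
      rw [Finset.mem_filter, Finset.mem_range] at hr ⊢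
      have := getD_anti hsort hr' hr.1
      exact ⟨by omega, by omega⟩
    rw [colCard hinj himg c]
    conv_rhs => rw [hT]
  rw [Finset.sum_congr rfl h5]
  -- Step 6: swap sums and identify with dimB
  rw [dimB]
  have h6 : ∀ c ∈ Finset.range lam1,
      (∑ r ∈ (Finset.range L.length).filter (fun r => c < L.getD r 0), r)
      = ∑ r ∈ Finset.range L.length, if c < L.getD r 0 then r else 0 := by
    intro c _
    rw [Finset.sum_filter]
  rw [Finset.sum_congr rfl h6, Finset.sum_comm]
  apply Finset.sum_congr rfl
  intro r hr
  rw [Finset.mem_range] at hr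
  have hle : L.getD r 0 ≤ lam1 := getD_anti hsort (Nat.zero_le r) hr
  have hfil : ∑ c ∈ Finset.range lam1, (if c < L.getD r 0 then r else 0)
      = ∑ c ∈ Finset.range (L.getD r 0), r := by
    rw [← Finset.sum_filter]
    congr 1
    ext c
    simp only [Finset.mem_filter, Finset.mem_range]
    omega
  rw [hfil, Finset.sum_const, Finset.card_range, smul_eq_mul]
  exact Nat.mul_comm _ _
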